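/- Let v₀, …, v_d be affinely independent points of ℝ^d with convex hull S, and let f : ℝ^d → ℝ be twice continuously differentiable on an open set containing S with ‖D²f(x)‖ ≤ M for all x ∈ S (operator norm of the second derivative, i.e., the spectral norm of the Hessian). Let f_l be the linear interpolant of f on S, and suppose S is contained in a closed ball of radius ρ. Then |f(s) − f_l(s)| ≤ (1/2) ρ² M for all s ∈ S. -/

import Mathlib

open Set

lemma taylor_seg_bound {E : Type*} [NormedAddCommGroup E] [NormedSpace ℝ E]
    (f : E → ℝ) (U : Set E) (hU : IsOpen U) (hf : ContDiffOn ℝ 2 f U)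
    (S : Set E) (hSc : Convex ℝ S) (hSU : S ⊆ U) (M : ℝ)
    (hM : ∀ x ∈ S, ‖fderiv ℝ (fderiv ℝ f) x‖ ≤ M)
    (s y : E) (hs : s ∈ S) (hy : y ∈ S) :
    |f y - f s - fderiv ℝ f s (y - s)| ≤ M / 2 * ‖y - s‖ ^ 2 := by
  have hM0 : 0 ≤ M := le_trans (norm_nonneg (fderiv ℝ (fderiv ℝ f) s)) (hM s hs)
  have hdf : ∀ x ∈ U, DifferentiableAt ℝ f x := fun x hx =>
    ((hf.differentiableOn two_ne_zero).differentiableAt (hU.mem_nhds hx))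
  have hdf2 : ∀ x ∈ U, DifferentiableAt ℝ (fderiv ℝ f) x := fun x hx =>
    (((hf.fderiv_of_isOpen (m := 1) hU (by norm_num)).differentiableOn one_ne_zero).differentiableAt
      (hU.mem_nhds hx))
  have hLip : ∀ x ∈ S, ‖fderiv ℝ f x - fderiv ℝ f s‖ ≤ M * ‖x - s‖ :=
    fun x hx => hSc.norm_image_sub_le_of_norm_fderiv_le
      (fun z hz => hdf2 z (hSU hz)) hM hs hx
  set u := y - s with hu
  set τ : ℝ → E := fun t => s + t • u with hτ
  have hτmem : ∀ t ∈ Icc (0:ℝ) 1, τ t ∈ S := by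
    intro t ht
    have : τ t = (1 - t) • s + t • y := by simp only [hτ, hu]; module
    rw [this]
    exact hSc hs hy (by linarith [ht.2]) ht.1 (by ring)
  set g : ℝ → ℝ := fun t => f (τ t) - f s - t * (fderiv ℝ f s u) with hg
  have hg' : ∀ t ∈ Icc (0:ℝ) 1,
      HasDerivAt g (fderiv ℝ f (τ t) u - fderiv ℝ f s u) t := by
    intro t ht
    have hτ' : HasDerivAt τ u t := by
      have h := ((hasDerivAt_id t).smul_const u).const_add s
      rw [one_smul] at h
      exact h
    have hF : HasDerivAt (fun t => f (τ t)) (fderiv ℝ f (τ t) u) t :=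
      (hdf (τ t) (hSU (hτmem t ht))).hasFDerivAt.comp_hasDerivAt t hτ'
    have h := (hF.sub_const (f s)).sub ((hasDerivAt_id t).mul_const (fderiv ℝ f s u))
    rw [one_mul] at h
    exact h
  have key : ∀ x ∈ Icc (0:ℝ) 1, ‖g x‖ ≤ M * ‖u‖ ^ 2 / 2 * x ^ 2 := by
    apply image_norm_le_of_norm_deriv_right_le_deriv_boundary'
      (fun t ht => (hg' t ht).continuousAt.continuousWithinAt)
      (fun t ht => (hg' t (Ico_subset_Icc_self ht)).hasDerivWithinAt)
      (by simp [hg, hτ])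
      (Continuous.continuousOn (by continuity))
      (B' := fun t => M * ‖u‖ ^ 2 * t)
    · intro t ht
      have : HasDerivAt (fun t : ℝ => M * ‖u‖ ^ 2 / 2 * t ^ 2) (M * ‖u‖ ^ 2 * t) t := by
        have := (hasDerivAt_pow 2 t).const_mul (M * ‖u‖ ^ 2 / 2)
        convert this using 1
        · rfl
        · rfl
        · ring
      exact this.hasDerivWithinAt
    · intro t ht
      have h1 : fderiv ℝ f (τ t) u - fderiv ℝ f s u = (fderiv ℝ f (τ t) - fderiv ℝ f s) u := by
        simp
      rw [Real.norm_eq_abs, h1]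
      calc |(fderiv ℝ f (τ t) - fderiv ℝ f s) u|
          ≤ ‖fderiv ℝ f (τ t) - fderiv ℝ f s‖ * ‖u‖ := (fderiv ℝ f (τ t) - fderiv ℝ f s).le_opNorm u
        _ ≤ M * ‖τ t - s‖ * ‖u‖ := by
            have := hLip (τ t) (hτmem t (Ico_subset_Icc_self ht))
            exact mul_le_mul_of_nonneg_right this (norm_nonneg u)
        _ = M * ‖u‖ ^ 2 * t := by
            have : ‖τ t - s‖ = t * ‖u‖ := by
              simp [hτ, norm_smul, abs_of_nonneg ht.1]
            rw [this]; ring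
  have h1 := key 1 (by norm_num)
  have hg1 : g 1 = f y - f s - fderiv ℝ f s (y - s) := by
    simp [hg, hτ, hu]
  rw [hg1, Real.norm_eq_abs] at h1
  calc |f y - f s - fderiv ℝ f s (y - s)| ≤ M * ‖y - s‖ ^ 2 / 2 * 1 ^ 2 := h1
    _ = M / 2 * ‖y - s‖ ^ 2 := by ring
open Set Finset

lemma parallel_axis {E : Type*} [NormedAddCommGroup E] [InnerProductSpace ℝ E]
    {ι : Type*} (t : Finset ι) (w : ι → ℝ) (v : ι → E) (s c : E) (ρ : ℝ)
    (hw0 : ∀ i ∈ t, 0 ≤ w i) (hw1 : ∑ i ∈ t, w i = 1)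
    (hs : ∑ i ∈ t, w i • v i = s) (hρ : ∀ i ∈ t, ‖v i - c‖ ≤ ρ) :
    ∑ i ∈ t, w i * ‖v i - s‖ ^ 2 ≤ ρ ^ 2 := by
  have hsc : ∑ i ∈ t, w i • (v i - c) = s - c := by
    simp only [smul_sub]
    rw [Finset.sum_sub_distrib, hs, ← Finset.sum_smul, hw1, one_smul]
  have hinner : ∑ i ∈ t, w i * (inner ℝ (v i - c) (s - c) : ℝ) = ‖s - c‖ ^ 2 := by
    have : ∑ i ∈ t, w i * (inner ℝ (v i - c) (s - c) : ℝ)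
        = (inner ℝ (∑ i ∈ t, w i • (v i - c)) (s - c) : ℝ) := by
      rw [sum_inner]
      exact Finset.sum_congr rfl fun i _ => (real_inner_smul_left _ _ _).symm
    rw [this, hsc, real_inner_self_eq_norm_sq]
  have expand : ∀ i ∈ t, ‖v i - s‖ ^ 2
      = ‖v i - c‖ ^ 2 - 2 * (inner ℝ (v i - c) (s - c) : ℝ) + ‖s - c‖ ^ 2 := by
    intro i _
    have h : v i - s = (v i - c) - (s - c) := by abel
    rw [h, @norm_sub_sq_real]
  calc ∑ i ∈ t, w i * ‖v i - s‖ ^ 2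
      = ∑ i ∈ t, w i * ‖v i - c‖ ^ 2
        - 2 * ∑ i ∈ t, w i * (inner ℝ (v i - c) (s - c) : ℝ)
        + (∑ i ∈ t, w i) * ‖s - c‖ ^ 2 := by
        rw [Finset.sum_mul, Finset.mul_sum, ← Finset.sum_sub_distrib, ← Finset.sum_add_distrib]
        exact Finset.sum_congr rfl fun i hi => by rw [expand i hi]; ring
    _ = ∑ i ∈ t, w i * ‖v i - c‖ ^ 2 - ‖s - c‖ ^ 2 := by
        rw [hinner, hw1]; ring
    _ ≤ ρ ^ 2 := by
        have h1 : ∑ i ∈ t, w i * ‖v i - c‖ ^ 2 ≤ ρ ^ 2 := by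
          calc ∑ i ∈ t, w i * ‖v i - c‖ ^ 2 ≤ ∑ i ∈ t, w i * ρ ^ 2 :=
                Finset.sum_le_sum fun i hi => mul_le_mul_of_nonneg_left
                  (pow_le_pow_left₀ (norm_nonneg _) (hρ i hi) 2) (hw0 i hi)
            _ = ρ ^ 2 := by rw [← Finset.sum_mul, hw1, one_mul]
        nlinarith [sq_nonneg ‖s - c‖]

/-- Case (iv) of the paper's Proposition 1: if `f` is `C²` on an open set containing the
simplex `S = conv{v₀, …, v_d}` with `‖D²f(x)‖ ≤ M` on `S` (operator norm of the second
derivative), and `S` is contained in a closed ball of radius `ρ`, then the linear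
interpolation error is at most `(1/2) ρ² M` on `S`. -/
theorem interpolation_error_le_half_radius_sq_mul_hessian_bound
    (d : ℕ) (v : Fin (d + 1) → EuclideanSpace ℝ (Fin d))
    (hv : AffineIndependent ℝ v)
    (f : EuclideanSpace ℝ (Fin d) → ℝ)
    (U : Set (EuclideanSpace ℝ (Fin d))) (hU : IsOpen U)
    (hSU : convexHull ℝ (Set.range v) ⊆ U)
    (hf : ContDiffOn ℝ 2 f U)
    (M : ℝ)
    (hM : ∀ x ∈ convexHull ℝ (Set.range v), ‖fderiv ℝ (fderiv ℝ f) x‖ ≤ M)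
    (fl : EuclideanSpace ℝ (Fin d) →ᵃ[ℝ] ℝ)
    (hfl : ∀ i, fl (v i) = f (v i))
    (c : EuclideanSpace ℝ (Fin d)) (ρ : ℝ)
    (hball : convexHull ℝ (Set.range v) ⊆ Metric.closedBall c ρ) :
    ∀ s ∈ convexHull ℝ (Set.range v), |f s - fl s| ≤ (1 / 2) * ρ ^ 2 * M := by
  intro s hs
  have hM0 : 0 ≤ M := le_trans (norm_nonneg (fderiv ℝ (fderiv ℝ f) s)) (hM s hs)
  have hSc : Convex ℝ (convexHull ℝ (Set.range v)) := convex_convexHull ℝ _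
  have hs' := hs
  rw [convexHull_range_eq_exists_affineCombination] at hs'
  obtain ⟨t, w, hw0, hw1, hsw⟩ := hs'
  have hlin : ∑ i ∈ t, w i • v i = s := by
    rw [← hsw, Finset.affineCombination_eq_linear_combination t v w hw1]
  have hvmem : ∀ i, v i ∈ convexHull ℝ (Set.range v) := fun i =>
    subset_convexHull ℝ _ (Set.mem_range_self i)
  have hfls : fl s = ∑ i ∈ t, w i * f (v i) := by
    rw [← hsw, Finset.map_affineCombination t v w hw1 fl,
      Finset.affineCombination_eq_linear_combination t (fl ∘ v) w hw1]
    exact Finset.sum_congr rfl fun i _ => by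
      simp [Function.comp, hfl i, smul_eq_mul]
  have hρi : ∀ i ∈ t, ‖v i - c‖ ≤ ρ := fun i _ => by
    have := hball (hvmem i)
    rwa [Metric.mem_closedBall, dist_eq_norm] at this
  have hTay : ∀ i ∈ t, |f (v i) - f s - fderiv ℝ f s (v i - s)| ≤ M / 2 * ‖v i - s‖ ^ 2 :=
    fun i _ => taylor_seg_bound f U hU hf _ hSc hSU M hM s (v i) hs (hvmem i)
  have hDsum : ∑ i ∈ t, w i * (fderiv ℝ f s (v i - s)) = 0 := by
    have hz : ∑ i ∈ t, w i • (v i - s) = 0 := by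
      simp only [smul_sub]
      rw [Finset.sum_sub_distrib, hlin, ← Finset.sum_smul, hw1, one_smul, sub_self]
    calc ∑ i ∈ t, w i * (fderiv ℝ f s (v i - s))
        = fderiv ℝ f s (∑ i ∈ t, w i • (v i - s)) := by
          rw [map_sum]
          exact Finset.sum_congr rfl fun i _ => by rw [map_smul]; rfl
      _ = 0 := by rw [hz, map_zero]
  have hiden : f s - fl s = ∑ i ∈ t, w i * (f s + fderiv ℝ f s (v i - s) - f (v i)) := by
    rw [show (∑ i ∈ t, w i * (f s + fderiv ℝ f s (v i - s) - f (v i)))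
        = (∑ i ∈ t, w i) * f s + (∑ i ∈ t, w i * fderiv ℝ f s (v i - s))
          - ∑ i ∈ t, w i * f (v i) from by
      rw [Finset.sum_mul, ← Finset.sum_add_distrib, ← Finset.sum_sub_distrib]
      exact Finset.sum_congr rfl fun i _ => by ring]
    rw [hw1, hDsum, hfls]; ring
  calc |f s - fl s| = |∑ i ∈ t, w i * (f s + fderiv ℝ f s (v i - s) - f (v i))| := by
        rw [hiden]
    _ ≤ ∑ i ∈ t, |w i * (f s + fderiv ℝ f s (v i - s) - f (v i))| :=
        Finset.abs_sum_le_sum_abs _ _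
    _ ≤ ∑ i ∈ t, w i * (M / 2 * ‖v i - s‖ ^ 2) := by
        refine Finset.sum_le_sum fun i hi => ?_
        rw [abs_mul, abs_of_nonneg (hw0 i hi)]
        refine mul_le_mul_of_nonneg_left ?_ (hw0 i hi)
        rw [show f s + fderiv ℝ f s (v i - s) - f (v i)
            = -(f (v i) - f s - fderiv ℝ f s (v i - s)) from by ring, abs_neg]
        exact hTay i hi
    _ = M / 2 * ∑ i ∈ t, w i * ‖v i - s‖ ^ 2 := by
        rw [Finset.mul_sum]
        exact Finset.sum_congr rfl fun i _ => by ring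
    _ ≤ M / 2 * ρ ^ 2 :=
        mul_le_mul_of_nonneg_left (parallel_axis t w v s c ρ hw0 hw1 hlin hρi) (by linarith)
    _ = (1 / 2) * ρ ^ 2 * M := by ring
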